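/- Eckart–Young theorem (Frobenius norm): Let φ ∈ ℝ^{d₁×d₂} have singular values σ₁ ≥ ... ≥ σ_r > 0, and let k < r. For every matrix ψ ∈ ℝ^{d₁×d₂} with rank(ψ) ≤ k, we have ‖φ − ψ‖_F ≥ sqrt(Σᵢ₌ₖ₊₁ʳ σᵢ²), with equality attained by the rank-k truncated SVD of φ. -/

import Mathlib

open Matrix

noncomputable def frobNorm {m n : ℕ} (M : Matrix (Fin m) (Fin n) ℝ) : ℝ :=
  Real.sqrt (∑ i, ∑ j, (M i j) ^ 2)

namespace EY

noncomputable def F2 {m n : ℕ} (M : Matrix (Fin m) (Fin n) ℝ) : ℝ :=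
  Matrix.trace (Mᵀ * M)

lemma F2_eq_sum {m n : ℕ} (M : Matrix (Fin m) (Fin n) ℝ) :
    F2 M = ∑ i, ∑ j, (M i j) ^ 2 := by
  simp only [F2, Matrix.trace, Matrix.diag, Matrix.mul_apply, Matrix.transpose_apply, sq]
  exact Finset.sum_comm

lemma F2_nonneg {m n : ℕ} (M : Matrix (Fin m) (Fin n) ℝ) : 0 ≤ F2 M := by
  rw [F2_eq_sum]; positivity

lemma frobNorm_eq {m n : ℕ} (M : Matrix (Fin m) (Fin n) ℝ) :
    frobNorm M = Real.sqrt (F2 M) := by rw [F2_eq_sum, frobNorm]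

lemma F2_mul_right {n r q : ℕ} (V : Matrix (Fin n) (Fin r) ℝ) (hV : Vᵀ * V = 1)
    (X : Matrix (Fin q) (Fin r) ℝ) : F2 (X * Vᵀ) = F2 X := by
  unfold F2
  rw [Matrix.transpose_mul, Matrix.transpose_transpose, Matrix.mul_assoc,
    Matrix.trace_mul_comm, Matrix.mul_assoc, Matrix.mul_assoc, hV, Matrix.mul_one,
    Matrix.trace_mul_comm]

lemma F2_mul_left {n r q : ℕ} (U : Matrix (Fin n) (Fin r) ℝ) (hU : Uᵀ * U = 1)
    (X : Matrix (Fin r) (Fin q) ℝ) : F2 (U * X) = F2 X := by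
  unfold F2
  rw [Matrix.transpose_mul, Matrix.mul_assoc, ← Matrix.mul_assoc Uᵀ, hU, Matrix.one_mul]

lemma F2_diagonal {r : ℕ} (g : Fin r → ℝ) :
    F2 (Matrix.diagonal g) = ∑ i, (g i) ^ 2 := by
  rw [F2_eq_sum]
  simp [Matrix.diagonal_apply, apply_ite (fun x : ℝ => x ^ 2)]

lemma F2_split {a b c : ℕ} (M : Matrix (Fin a) (Fin c) ℝ) (B : Matrix (Fin a) (Fin b) ℝ)
    (hB : Bᵀ * B = 1) : F2 M = F2 (M - B * Bᵀ * M) + F2 (Bᵀ * M) := by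
  have h1 : M - B * Bᵀ * M = M - B * (Bᵀ * M) := by rw [Matrix.mul_assoc]
  unfold F2
  rw [h1]
  have hGt : (B * (Bᵀ * M))ᵀ = (Mᵀ * B) * Bᵀ := by
    rw [Matrix.transpose_mul, Matrix.transpose_mul, Matrix.transpose_transpose,
      Matrix.mul_assoc]
  rw [Matrix.transpose_sub, Matrix.sub_mul, Matrix.mul_sub, Matrix.mul_sub, hGt,
    Matrix.transpose_mul]
  have e1 : Mᵀ * B * Bᵀ * (B * (Bᵀ * M)) = Mᵀ * B * (Bᵀ * M) := by
    rw [Matrix.mul_assoc (Mᵀ * B), ← Matrix.mul_assoc Bᵀ, hB, Matrix.one_mul]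
  have e2 : Mᵀ * (B * (Bᵀ * M)) = Mᵀ * B * (Bᵀ * M) := by
    rw [Matrix.mul_assoc]
  have e3 : Mᵀ * B * Bᵀ * M = Mᵀ * B * (Bᵀ * M) := by rw [Matrix.mul_assoc]
  rw [e1, e2, e3]
  simp only [Matrix.trace_sub, Matrix.transpose_transpose]
  ring

lemma card_lt_filter {r k : ℕ} (hk : k < r) :
    (Finset.univ.filter (fun i : Fin r => ¬ k ≤ (i : ℕ))).card = k := by
  have : (Finset.univ.filter (fun i : Fin r => ¬ k ≤ (i : ℕ))) = Finset.Iio (⟨k, hk⟩ : Fin r) := by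
    ext i; simp [Fin.lt_def]
  rw [this, Fin.card_Iio]

lemma weight_sum {r k : ℕ} (hk : k < r) (a t : Fin r → ℝ)
    (hamono : ∀ i j : Fin r, i ≤ j → a j ≤ a i) (hac : 0 ≤ a ⟨k, hk⟩)
    (ht0 : ∀ i, 0 ≤ t i) (ht1 : ∀ i, t i ≤ 1) (htsum : ∑ i, t i ≤ (k : ℝ)) :
    ∑ i ∈ Finset.univ.filter (fun i : Fin r => k ≤ (i : ℕ)), a i ≤ ∑ i, a i * (1 - t i) := by
  classical
  set κ : Fin r := ⟨k, hk⟩ with hκ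
  set c := a κ with hc
  have hsplit : ∑ i, a i * (1 - t i)
      = ∑ i ∈ Finset.univ.filter (fun i : Fin r => k ≤ (i : ℕ)), a i * (1 - t i)
        + ∑ i ∈ Finset.univ.filter (fun i : Fin r => ¬ k ≤ (i : ℕ)), a i * (1 - t i) :=
    (Finset.sum_filter_add_sum_filter_not _ _ _).symm
  have htsplit : ∑ i ∈ Finset.univ.filter (fun i : Fin r => k ≤ (i : ℕ)), t i
        + ∑ i ∈ Finset.univ.filter (fun i : Fin r => ¬ k ≤ (i : ℕ)), t i = ∑ i, t i :=
    by exact Finset.sum_filter_add_sum_filter_not _ (fun i : Fin r => k ≤ (i : ℕ)) t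
  have hS : ∑ i ∈ Finset.univ.filter (fun i : Fin r => k ≤ (i : ℕ)), (a i - c * t i)
      ≤ ∑ i ∈ Finset.univ.filter (fun i : Fin r => k ≤ (i : ℕ)), a i * (1 - t i) := by
    apply Finset.sum_le_sum
    intro i hi
    simp only [Finset.mem_filter] at hi
    have hle : a i ≤ c := hamono κ i (by show k ≤ (i : ℕ); exact hi.2)
    nlinarith [ht0 i, mul_le_mul_of_nonneg_right hle (ht0 i)]
  have hT : ∑ i ∈ Finset.univ.filter (fun i : Fin r => ¬ k ≤ (i : ℕ)), (c * (1 - t i))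
      ≤ ∑ i ∈ Finset.univ.filter (fun i : Fin r => ¬ k ≤ (i : ℕ)), a i * (1 - t i) := by
    apply Finset.sum_le_sum
    intro i hi
    simp only [Finset.mem_filter] at hi
    have hle : c ≤ a i := hamono i κ (by show (i : ℕ) ≤ k; have := hi.2; omega)
    have : 0 ≤ 1 - t i := by linarith [ht1 i]
    exact mul_le_mul_of_nonneg_right hle this
  have hTs : ∑ i ∈ Finset.univ.filter (fun i : Fin r => ¬ k ≤ (i : ℕ)), (c * (1 - t i))
      = c * (k - ∑ i ∈ Finset.univ.filter (fun i : Fin r => ¬ k ≤ (i : ℕ)), t i) := by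
    rw [← Finset.mul_sum, Finset.sum_sub_distrib, Finset.sum_const, card_lt_filter hk]
    simp
  have hSs : ∑ i ∈ Finset.univ.filter (fun i : Fin r => k ≤ (i : ℕ)), (a i - c * t i)
      = (∑ i ∈ Finset.univ.filter (fun i : Fin r => k ≤ (i : ℕ)), a i)
        - c * ∑ i ∈ Finset.univ.filter (fun i : Fin r => k ≤ (i : ℕ)), t i := by
    rw [Finset.sum_sub_distrib, Finset.mul_sum]
  have hfinal : 0 ≤ c * (k - ∑ i, t i) := mul_nonneg hac (by linarith)
  nlinarith [hS, hT, hTs, hSs, hsplit, htsplit]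

lemma exists_proj {d₁ d₂ k : ℕ} (ψ : Matrix (Fin d₁) (Fin d₂) ℝ) (h : ψ.rank ≤ k) :
    ∃ (m : ℕ) (B : Matrix (Fin d₁) (Fin m) ℝ), m ≤ k ∧ Bᵀ * B = 1 ∧ (B * Bᵀ) * ψ = ψ := by
  classical
  set W : Submodule ℝ (EuclideanSpace ℝ (Fin d₁)) := LinearMap.range ((WithLp.linearEquiv 2 ℝ (Fin d₁ → ℝ)).symm.toLinearMap ∘ₗ ψ.mulVecLin) with hW
  haveI : FiniteDimensional ℝ W := inferInstance
  set m := Module.finrank ℝ W with hmdef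
  have hm : m ≤ k := by
    rw [hmdef, hW, LinearMap.range_comp, LinearEquiv.finrank_map_eq]; exact h
  set b := stdOrthonormalBasis ℝ W with hb
  set B : Matrix (Fin d₁) (Fin m) ℝ := fun i q => (b q : EuclideanSpace ℝ (Fin d₁)) i with hBdef
  have hinner : ∀ (x y : W), (inner ℝ x y : ℝ) =
      ∑ i, (x : EuclideanSpace ℝ (Fin d₁)) i * (y : EuclideanSpace ℝ (Fin d₁)) i := by
    intro x y
    rw [Submodule.coe_inner]
    simp [PiLp.inner_apply, RCLike.inner_apply, mul_comm]
  have hBtB : Bᵀ * B = 1 := by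
    ext q q'
    have := orthonormal_iff_ite.mp b.orthonormal q q'
    rw [hinner] at this
    simp only [Matrix.mul_apply, Matrix.transpose_apply, Matrix.one_apply]
    simpa using this
  refine ⟨m, B, hm, hBtB, ?_⟩
  have key : ∀ x : W, ∀ i,
      ∑ q, B i q * (∑ l, B l q * (x : EuclideanSpace ℝ (Fin d₁)) l)
        = (x : EuclideanSpace ℝ (Fin d₁)) i := by
    intro x i
    have hx := b.sum_repr x
    have hrepr : ∀ q, b.repr x q = ∑ l, B l q * (x : EuclideanSpace ℝ (Fin d₁)) l := by
      intro q
      rw [b.repr_apply_apply x q, hinner]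
    calc ∑ q, B i q * (∑ l, B l q * (x : EuclideanSpace ℝ (Fin d₁)) l)
        = ∑ q, (b.repr x q) * B i q := by
          refine Finset.sum_congr rfl fun q _ => ?_
          rw [hrepr q]; ring
      _ = (x : EuclideanSpace ℝ (Fin d₁)) i := by
          have hx2 : ∑ q, b.repr x q • ((b q : EuclideanSpace ℝ (Fin d₁)) i)
              = (x : EuclideanSpace ℝ (Fin d₁)) i := by
            have h3 := congrArg (fun z : W => (z : EuclideanSpace ℝ (Fin d₁)) i) hx
            simp only [AddSubmonoidClass.coe_finset_sum, SetLike.val_smul] at h3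
            rw [WithLp.ofLp_sum, Finset.sum_apply] at h3
            simpa [PiLp.smul_apply] using h3
          rw [← hx2]
          exact Finset.sum_congr rfl fun q _ => by rw [smul_eq_mul]
  ext i j
  have hcol : WithLp.toLp 2 (fun i => ψ i j) ∈ W := by
    refine ⟨Pi.single j 1, ?_⟩
    show WithLp.toLp 2 (ψ.mulVec (Pi.single j 1)) = WithLp.toLp 2 (fun i => ψ i j)
    congr 1
    funext i
    simp [Matrix.mulVec_single]
  have := key ⟨WithLp.toLp 2 (fun i => ψ i j), hcol⟩ i
  simp only [Matrix.mul_apply, Matrix.transpose_apply]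
  calc ∑ l, (∑ q, B i q * B l q) * ψ l j
      = ∑ l, ∑ q, B i q * (B l q * ψ l j) := by
        refine Finset.sum_congr rfl fun l _ => ?_
        rw [Finset.sum_mul]; exact Finset.sum_congr rfl fun q _ => by ring
    _ = ∑ q, B i q * (∑ l, B l q * ψ l j) := by
        rw [Finset.sum_comm]
        exact Finset.sum_congr rfl fun q _ => by rw [Finset.mul_sum]
    _ = ψ i j := this

end EY

theorem eckart_young_frobenius {d₁ d₂ r : ℕ}
    (φ : Matrix (Fin d₁) (Fin d₂) ℝ)
    (U : Matrix (Fin d₁) (Fin r) ℝ) (V : Matrix (Fin d₂) (Fin r) ℝ)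
    (σ : Fin r → ℝ)
    (hU : Uᵀ * U = 1) (hV : Vᵀ * V = 1)
    (hσpos : ∀ i, 0 < σ i) (hσmono : Antitone σ)
    (hφ : φ = U * Matrix.diagonal σ * Vᵀ)
    (k : ℕ) (hk : k < r) :
    (∀ ψ : Matrix (Fin d₁) (Fin d₂) ℝ, ψ.rank ≤ k →
        Real.sqrt (∑ i ∈ Finset.univ.filter (fun i : Fin r => k ≤ (i : ℕ)), (σ i) ^ 2) ≤
          frobNorm (φ - ψ)) ∧
      frobNorm (φ - U * Matrix.diagonal (fun i : Fin r => if (i : ℕ) < k then σ i else 0) * Vᵀ) =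
        Real.sqrt (∑ i ∈ Finset.univ.filter (fun i : Fin r => k ≤ (i : ℕ)), (σ i) ^ 2) := by
  classical
  constructor
  · intro ψ hrank
    obtain ⟨m, B, hm, hBtB, hPψ⟩ := EY.exists_proj ψ hrank
    set C := Bᵀ * U with hC
    set t : Fin r → ℝ := fun i => ∑ q, (C q i) ^ 2 with ht
    have hCt : Cᵀ = Uᵀ * B := by rw [hC, Matrix.transpose_mul, Matrix.transpose_transpose]
    have ht0 : ∀ i, 0 ≤ t i := fun i => Finset.sum_nonneg fun q _ => sq_nonneg _
    have hCtC : ∀ i, (Cᵀ * C) i i = t i := by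
      intro i
      rw [Matrix.mul_apply, ht]
      exact Finset.sum_congr rfl fun q _ => by rw [Matrix.transpose_apply, sq]
    have hRtR : (U - B * C)ᵀ * (U - B * C) = 1 - Cᵀ * C := by
      rw [Matrix.transpose_sub, Matrix.sub_mul, Matrix.mul_sub, Matrix.mul_sub, hU,
        Matrix.transpose_mul]
      have e1 : Uᵀ * (B * C) = Cᵀ * C := by rw [← Matrix.mul_assoc, ← hCt]
      have e2 : Cᵀ * Bᵀ * U = Cᵀ * C := by rw [Matrix.mul_assoc, ← hC]
      have e3 : Cᵀ * Bᵀ * (B * C) = Cᵀ * C := by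
        rw [Matrix.mul_assoc, ← Matrix.mul_assoc Bᵀ, hBtB, Matrix.one_mul]
      rw [e1, e2, e3]; abel
    have ht1 : ∀ i, t i ≤ 1 := by
      intro i
      have h0 : 0 ≤ ((U - B * C)ᵀ * (U - B * C)) i i := by
        rw [Matrix.mul_apply]
        exact Finset.sum_nonneg fun l _ => by
          rw [Matrix.transpose_apply]; exact mul_self_nonneg _
      rw [hRtR, Matrix.sub_apply, Matrix.one_apply_eq, hCtC] at h0
      linarith
    have htsum : ∑ i, t i ≤ (k : ℝ) := by
      have hR2 : (Bᵀ - C * Uᵀ) * (Bᵀ - C * Uᵀ)ᵀ = 1 - C * Cᵀ := by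
        rw [Matrix.transpose_sub, Matrix.transpose_transpose, Matrix.transpose_mul,
          Matrix.transpose_transpose, Matrix.sub_mul, Matrix.mul_sub, Matrix.mul_sub, hBtB]
        have e1 : Bᵀ * (U * Cᵀ) = C * Cᵀ := by rw [← Matrix.mul_assoc, ← hC]
        have e2 : C * Uᵀ * B = C * Cᵀ := by rw [Matrix.mul_assoc, ← hCt]
        have e3 : C * Uᵀ * (U * Cᵀ) = C * Cᵀ := by
          rw [Matrix.mul_assoc, ← Matrix.mul_assoc Uᵀ, hU, Matrix.one_mul]
        rw [e1, e2, e3]; abel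
      have h4 : EY.F2 ((Bᵀ - C * Uᵀ)ᵀ) = Matrix.trace ((Bᵀ - C * Uᵀ) * (Bᵀ - C * Uᵀ)ᵀ) := by
        unfold EY.F2; rw [Matrix.transpose_transpose]
      have h5 : (0:ℝ) ≤ Matrix.trace ((Bᵀ - C * Uᵀ) * (Bᵀ - C * Uᵀ)ᵀ) :=
        h4 ▸ EY.F2_nonneg _
      rw [hR2] at h5
      have h6 : Matrix.trace (1 - C * Cᵀ : Matrix (Fin m) (Fin m) ℝ)
          = (m : ℝ) - Matrix.trace (C * Cᵀ) := by
        rw [Matrix.trace_sub, Matrix.trace_one]; simp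
      have h7 : Matrix.trace (C * Cᵀ) = ∑ i, t i := by
        simp only [Matrix.trace, Matrix.diag, Matrix.mul_apply, Matrix.transpose_apply]
        rw [Finset.sum_comm]
        exact Finset.sum_congr rfl fun i _ =>
          Finset.sum_congr rfl fun q _ => by rw [sq]
      have hmk : (m : ℝ) ≤ (k : ℝ) := Nat.cast_le.mpr hm
      rw [h6, h7] at h5
      linarith
    have hF2φ : EY.F2 φ = ∑ i, (σ i) ^ 2 := by
      rw [hφ, EY.F2_mul_right V hV, EY.F2_mul_left U hU, EY.F2_diagonal]
    have hBφ : Bᵀ * φ = (C * Matrix.diagonal σ) * Vᵀ := by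
      rw [hφ, ← Matrix.mul_assoc, ← Matrix.mul_assoc, hC]
    have hF2Bφ : EY.F2 (Bᵀ * φ) = ∑ i, (σ i) ^ 2 * t i := by
      rw [hBφ, EY.F2_mul_right V hV, EY.F2_eq_sum]
      rw [Finset.sum_comm]
      refine Finset.sum_congr rfl fun i _ => ?_
      rw [ht, Finset.mul_sum]
      refine Finset.sum_congr rfl fun q _ => ?_
      rw [Matrix.mul_diagonal]; ring
    have hsplit1 := EY.F2_split (φ - ψ) B hBtB
    have hsplit2 := EY.F2_split φ B hBtB
    have hMP : (φ - ψ) - B * Bᵀ * (φ - ψ) = φ - B * Bᵀ * φ := by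
      rw [Matrix.mul_sub, hPψ]; abel
    have hchain : ∑ i, (σ i) ^ 2 * (1 - t i) ≤ EY.F2 (φ - ψ) := by
      have hle : EY.F2 (φ - B * Bᵀ * φ) ≤ EY.F2 (φ - ψ) := by
        rw [← hMP]; linarith [hsplit1, EY.F2_nonneg (Bᵀ * (φ - ψ))]
      have hval : ∑ i, (σ i) ^ 2 * (1 - t i) = EY.F2 φ - EY.F2 (Bᵀ * φ) := by
        rw [hF2φ, hF2Bφ, ← Finset.sum_sub_distrib]
        exact Finset.sum_congr rfl fun i _ => by ring
      linarith [hsplit2]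
    have hweight := EY.weight_sum hk (fun i => (σ i) ^ 2) t
      (fun i j hij => pow_le_pow_left₀ (hσpos j).le (hσmono hij) 2)
      (by positivity) ht0 ht1 htsum
    rw [EY.frobNorm_eq]
    exact Real.sqrt_le_sqrt (le_trans hweight hchain)
  · have hdd : Matrix.diagonal σ
        - Matrix.diagonal (fun i : Fin r => if (i : ℕ) < k then σ i else 0)
        = Matrix.diagonal (fun i : Fin r => if (i : ℕ) < k then 0 else σ i) := by
      ext i j
      by_cases hij : i = j
      · subst hij
        simp only [Matrix.sub_apply, Matrix.diagonal_apply_eq]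
        split <;> simp
      · simp [Matrix.diagonal_apply_ne _ hij]
    have hdiff : φ - U * Matrix.diagonal (fun i : Fin r => if (i : ℕ) < k then σ i else 0) * Vᵀ
        = U * Matrix.diagonal (fun i : Fin r => if (i : ℕ) < k then 0 else σ i) * Vᵀ := by
      rw [hφ, ← Matrix.sub_mul, ← Matrix.mul_sub, hdd]
    rw [hdiff, EY.frobNorm_eq, EY.F2_mul_right V hV, EY.F2_mul_left U hU, EY.F2_diagonal]
    congr 1
    rw [Finset.sum_filter]
    refine Finset.sum_congr rfl fun i _ => ?_
    rcases lt_or_ge ((i : ℕ)) k with h | h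
    · simp [h, Nat.not_le.mpr h]
    · simp [h, Nat.not_lt.mpr h]
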